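/- Let k ≥ 2 and let G be a complete k-partite multigraph with parts S_1, …, S_k each of size n, with a shuffle-preserved edge coloring using at most 2 colors in total. If 2(p−1) < n, then there exist p-element subsets A_i ⊆ S_i for each i and a single color c such that every edge between A_i and A_j (i ≠ j) has color c (a monochromatic complete p×p×⋯×p k-partite subgraph). -/
import Mathlib


/-- k-partite generalization: every shuffle-preserved 2-coloring of a
complete n×⋯×n k-partite multigraph contains a monochromatic complete
p×⋯×p k-partite subgraph if 2(p-1) < n. -/
theorem ramsey_kpartite
    {C : Type*} (k n p : ℕ) (hk : 2 ≤ k) (hn : 0 < n) (hp : 0 < p)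
    (η : (Fin k × Fin n) → (Fin k × Fin n) → Set C)
    (hsymm : ∀ u v, η u v = η v u)
    (hne : ∀ u v, u.1 ≠ v.1 → (η u v).Nonempty)
    (hcolors : ∃ s : Finset C, s.card ≤ 2 ∧ ∀ u v c, c ∈ η u v → c ∈ s)
    (hshuffle : ∀ (c : C) u v, (∃ w, w.1 ≠ u.1 ∧ c ∈ η u w) →
      (∃ w, w.1 ≠ v.1 ∧ c ∈ η v w) → u.1 ≠ v.1 → c ∈ η u v)
    (hlt : 2 * (p - 1) < n) :
    ∃ (c : C) (A : Fin k → Finset (Fin n)),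
      (∀ i, (A i).card = p) ∧
      ∀ i j, i ≠ j → ∀ a ∈ A i, ∀ b ∈ A j, c ∈ η (i, a) (j, b) := by
  classical
  obtain ⟨s, hs2, hsmem⟩ := hcolors
  set D : (Fin k × Fin n) → Set C := fun u => {c | ∃ w, w.1 ≠ u.1 ∧ c ∈ η u w} with hD
  have hDs : ∀ u c, c ∈ D u → c ∈ s := by
    rintro u c ⟨w, hw, hc⟩; exact hsmem u w c hc
  haveI : Nontrivial (Fin k) := Fin.nontrivial_iff_two_le.mpr hk
  have hDne : ∀ u : Fin k × Fin n, (D u).Nonempty := by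
    intro u
    obtain ⟨i, hi⟩ := exists_ne u.1
    obtain ⟨c, hc⟩ := hne u (i, ⟨0, hn⟩) hi.symm
    exact ⟨c, (i, ⟨0, hn⟩), hi, hc⟩
  have hsne : s.Nonempty := by
    obtain ⟨c, hc⟩ := hne (⟨0, by omega⟩, ⟨0, hn⟩) (⟨1, by omega⟩, ⟨0, hn⟩)
      (by simp [Fin.ext_iff])
    exact ⟨c, hsmem _ _ _ hc⟩
  obtain ⟨a, ha⟩ := hsne
  obtain ⟨b, hab⟩ : ∃ b, ∀ c ∈ s, c = a ∨ c = b := by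
    by_cases h : ∃ b ∈ s, b ≠ a
    · obtain ⟨b, hb, hba⟩ := h
      refine ⟨b, fun c hc => ?_⟩
      by_contra hcc
      push_neg at hcc
      have hsub : ({a, b, c} : Finset C) ⊆ s := by
        intro x hx
        simp only [Finset.mem_insert, Finset.mem_singleton] at hx
        rcases hx with rfl | rfl | rfl <;> assumption
      have h3 : ({a, b, c} : Finset C).card = 3 := by
        rw [Finset.card_insert_of_notMem (by simp [Ne.symm hba, Ne.symm hcc.1]),
          Finset.card_insert_of_notMem (by simp [Ne.symm hcc.2]),
          Finset.card_singleton]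
      have := Finset.card_le_card hsub
      omega
    · push_neg at h
      exact ⟨a, fun c hc => Or.inl (h c hc)⟩
  set F : C → Fin k → Finset (Fin n) :=
    fun c i => Finset.univ.filter (fun x => c ∈ D (i, x)) with hF
  have hcover : ∀ i : Fin k, n ≤ (F a i).card + (F b i).card := by
    intro i
    have hsub : (Finset.univ : Finset (Fin n)) ⊆ F a i ∪ F b i := by
      intro x _
      obtain ⟨c, hc⟩ := hDne (i, x)
      rcases hab c (hDs _ _ hc) with rfl | rfl
      · exact Finset.mem_union_left _ (by simp [hF, hc])
      · exact Finset.mem_union_right _ (by simp [hF, hc])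
    have := Finset.card_le_card hsub
    have hu := Finset.card_union_le (F a i) (F b i)
    simp only [Finset.card_univ, Fintype.card_fin] at this
    omega
  have key : (∀ i, p ≤ (F a i).card) ∨ (∀ i, p ≤ (F b i).card) := by
    by_contra h
    push_neg at h
    obtain ⟨⟨i, hi⟩, ⟨j, hj⟩⟩ := h
    by_cases hij : i = j
    · subst hij; have := hcover i; omega
    · have hx : ∃ x, x ∉ F a i := by
        by_contra hx; push_neg at hx
        have : (F a i) = Finset.univ := Finset.eq_univ_of_forall hx
        rw [this] at hi
        simp only [Finset.card_univ, Fintype.card_fin] at hi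
        omega
      have hy : ∃ y, y ∉ F b j := by
        by_contra hy; push_neg at hy
        have : (F b j) = Finset.univ := Finset.eq_univ_of_forall hy
        rw [this] at hj
        simp only [Finset.card_univ, Fintype.card_fin] at hj
        omega
      obtain ⟨x, hx⟩ := hx
      obtain ⟨y, hy⟩ := hy
      obtain ⟨c, hc⟩ := hne (i, x) (j, y) hij
      have hcx : c ∈ D (i, x) := ⟨(j, y), Ne.symm hij, hc⟩
      have hcy : c ∈ D (j, y) := ⟨(i, x), hij, by rw [hsymm]; exact hc⟩
      rcases hab c (hDs _ _ hcx) with rfl | rfl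
      · exact hx (by simp [hF, hcx])
      · exact hy (by simp [hF, hcy])
  obtain ⟨c, hcF⟩ : ∃ c, ∀ i, p ≤ (F c i).card := key.elim (⟨a, ·⟩) (⟨b, ·⟩)
  have hA : ∀ i : Fin k, ∃ A : Finset (Fin n), A ⊆ F c i ∧ A.card = p :=
    fun i => Finset.exists_subset_card_eq (hcF i)
  choose A hAsub hAcard using hA
  refine ⟨c, A, hAcard, ?_⟩
  intro i j hij x hx y hy
  have hxD : c ∈ D (i, x) := by
    have := hAsub i hx; simp only [hF, Finset.mem_filter] at this; exact this.2
  have hyD : c ∈ D (j, y) := by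
    have := hAsub j hy; simp only [hF, Finset.mem_filter] at this; exact this.2
  exact hshuffle c (i, x) (j, y) hxD hyD hij
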